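/- For a subset Ω of D and positive integer n, the ring Int^{n-1}(Ω, D) of polynomials f ∈ K[X] whose divided differences Φ^k(f) of order k ≤ n-1 map Ω^{k+1} into D equals the intersection of the pullbacks D(q) = D[X] + q·K[X], as q ranges over all monic polynomials of degree n over D whose roots all lie in Ω. -/

import Mathlib

open Polynomial

section Aux

variable {L : Type*} [Field L]

lemma modByMonic_modByMonic_of_dvd {p q f : L[X]} (hp : p.Monic) (hq : q.Monic) (hpq : p ∣ q) :
    (f %ₘ q) %ₘ p = f %ₘ p := by
  conv_rhs => rw [← modByMonic_add_div f q]
  rw [add_modByMonic, (modByMonic_eq_zero_iff_dvd hp).2 (hpq.mul_right _), add_zero]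

lemma monic_prodXsubC {R : Type*} [CommRing R] {ι : Type*} (s : Finset ι) (b : ι → R) :
    (∏ i ∈ s, (X - C (b i))).Monic :=
  monic_prod_of_monic _ _ fun i _ => monic_X_sub_C _

lemma degree_prodXsubC (m : ℕ) (b : ℕ → L) :
    (∏ i ∈ Finset.range m, (X - C (b i))).degree = (m : WithBot ℕ) := by
  rw [degree_prod]
  simp [degree_X_sub_C]

end Aux

variable (D : Type*) [CommRing D] [IsDomain D]

noncomputable abbrev K := FractionRing D

/-- The pullback `D(p) = D[X] + p·K[X]` as a subring of `K[X]`. -/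
noncomputable def Dp (p : D[X]) : Subring (Polynomial (K D)) where
  carrier := {f | ∃ r : D[X], ∃ q : Polynomial (K D),
    f = r.map (algebraMap D (K D)) + p.map (algebraMap D (K D)) * q}
  zero_mem' := ⟨0, 0, by simp⟩
  one_mem' := ⟨1, 0, by simp⟩
  add_mem' := by
    rintro a b ⟨r1, q1, rfl⟩ ⟨r2, q2, rfl⟩
    exact ⟨r1 + r2, q1 + q2, by push_cast [Polynomial.map_add]; ring⟩
  mul_mem' := by
    rintro a b ⟨r1, q1, rfl⟩ ⟨r2, q2, rfl⟩
    exact ⟨r1 * r2, r1.map (algebraMap D (K D)) * q2 + q1 * (r2.map (algebraMap D (K D)))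
      + p.map (algebraMap D (K D)) * q1 * q2, by push_cast [Polynomial.map_mul]; ring⟩
  neg_mem' := by
    rintro a ⟨r, q, rfl⟩
    exact ⟨-r, -q, by push_cast [Polynomial.map_neg]; ring⟩

lemma mem_Dp (p : D[X]) (f : Polynomial (K D)) :
    f ∈ Dp D p ↔ ∃ r : D[X], ∃ q : Polynomial (K D),
      f = r.map (algebraMap D (K D)) + p.map (algebraMap D (K D)) * q := Iff.rfl

/-- The `k`-th divided difference `Φ^k(f)(a 0, …, a k)` of a polynomial `f`, defined (in a way
valid also for repeated nodes) as the coefficient of `X^k` in the remainder of the division of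
`f` by `∏ i, (X - a i)`; for pairwise distinct nodes this agrees with the recursive definition
`Φ^k(f)(X_0,…,X_k) = (Φ^{k-1}(f)(X_0,…,X_{k-1}) - Φ^{k-1}(f)(X_0,…,X_{k-2},X_k))/(X_{k-1}-X_k)`. -/
noncomputable def divDiff {L : Type*} [Field L] (k : ℕ) (f : Polynomial L)
    (a : Fin (k + 1) → L) : L :=
  (f %ₘ ∏ i, (X - C (a i))).coeff k

/-- For `Ω ⊆ D` and `n > 0`, the ring `Int^{n-1}(Ω, D)` of polynomials in `K[X]` whose divided
differences of order `≤ n-1` are integer-valued on `Ω` equals the intersection of the pullbacks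
`D(q)`, as `q` ranges over monic degree-`n` polynomials split over `D` with all roots in `Ω`. -/
theorem int_divDiff_eq_iInter_Dp (Ω : Set D) (n : ℕ) (hn : 0 < n) :
    {f : Polynomial (K D) | ∀ k < n, ∀ a : Fin (k + 1) → D, (∀ i, a i ∈ Ω) →
        ∃ d : D, divDiff k f (fun i => algebraMap D (K D) (a i)) = algebraMap D (K D) d} =
      ⋂ q ∈ {q : D[X] | ∃ a : ℕ → D, (∀ i < n, a i ∈ Ω) ∧
        q = ∏ i ∈ Finset.range n, (X - C (a i))}, (Dp D q : Set (Polynomial (K D))) := by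
  have φ := algebraMap D (K D)
  ext f
  simp only [Set.mem_setOf_eq, Set.mem_iInter, SetLike.mem_coe, mem_Dp]
  constructor
  · -- forward
    rintro hf q ⟨a, ha, rfl⟩
    set b : ℕ → K D := fun i => algebraMap D (K D) (a i) with hb
    have hmapN : ∀ m : ℕ, (∏ i ∈ Finset.range m, (X - C (a i))).map (algebraMap D (K D)) =
        ∏ i ∈ Finset.range m, (X - C (b i)) := by
      intro m
      simp [Polynomial.map_prod, hb]
    have key : ∀ m, m ≤ n → ∃ s : D[X],
        f %ₘ (∏ i ∈ Finset.range m, (X - C (b i))) = s.map (algebraMap D (K D)) := by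
      intro m
      induction m with
      | zero => intro _; exact ⟨0, by simp [modByMonic_one]⟩
      | succ m ih =>
        intro hm1
        obtain ⟨s, hs⟩ := ih (le_of_lt hm1)
        set Nm := ∏ i ∈ Finset.range m, (X - C (b i)) with hNm
        set NM := ∏ i ∈ Finset.range (m + 1), (X - C (b i)) with hNM
        have hNmM : Nm.Monic := monic_prodXsubC _ _
        have hNMM : NM.Monic := monic_prodXsubC _ _
        have hdvd : Nm ∣ NM :=
          Finset.prod_dvd_prod_of_subset _ _ _ (Finset.range_subset_range.2 (Nat.le_succ m))
        set g := f %ₘ NM with hg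
        have hgm : g %ₘ Nm = s.map (algebraMap D (K D)) := by
          rw [hg, modByMonic_modByMonic_of_dvd hNmM hNMM hdvd, hs]
        -- g = s.map + Nm * h
        have hgeq : g = s.map (algebraMap D (K D)) + Nm * (g /ₘ Nm) := by
          conv_lhs => rw [← modByMonic_add_div g Nm]
          rw [hgm]
        set h := g /ₘ Nm with hh
        have hdegg : g.degree < (m + 1 : ℕ) := by
          have := degree_modByMonic_lt f hNMM
          rwa [degree_prodXsubC] at this
        have hdegs : (s.map (algebraMap D (K D))).degree < (m : ℕ) := by
          rw [← hgm]
          have := degree_modByMonic_lt g hNmM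
          rwa [degree_prodXsubC] at this
        have hdegNm : Nm.degree = (m : ℕ) := degree_prodXsubC _ _
        have hdegh : h.degree ≤ 0 := by
          have hNh : (Nm * h).degree < ((m + 1 : ℕ) : WithBot ℕ) := by
            have heq : Nm * h = g - s.map (algebraMap D (K D)) := by
              rw [hgeq]; ring
            rw [heq]
            refine lt_of_le_of_lt (degree_sub_le _ _) (max_lt hdegg ?_)
            exact lt_trans hdegs (by exact_mod_cast Nat.lt_succ_self m)
          rw [mul_comm, hNmM.degree_mul, hdegNm] at hNh
          rw [← Nat.WithBot.lt_one_iff_le_zero]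
          have hcast : ((m + 1 : ℕ) : WithBot ℕ) = (m : WithBot ℕ) + 1 := by push_cast; ring
          rw [hcast, add_comm h.degree, WithBot.add_lt_add_iff_left (by simp : (m : WithBot ℕ) ≠ ⊥)]
            at hNh
          exact hNh
        have hhC : h = C (h.coeff 0) := eq_C_of_degree_le_zero hdegh
        -- coefficient m of g
        have hNmc : Nm.coeff m = 1 := by
          have := hNmM.coeff_natDegree
          rwa [(natDegree_eq_of_degree_eq_some hdegNm)] at this
        have hcoef : g.coeff m = h.coeff 0 := by
          rw [hgeq, coeff_add, coeff_eq_zero_of_degree_lt hdegs, zero_add]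
          conv_lhs => rw [hhC]
          rw [coeff_mul_C, hNmc, one_mul]
        -- divided difference hypothesis
        have hdd := hf m hm1 (fun i => a i) (fun i => ha i (lt_of_lt_of_le i.isLt hm1))
        obtain ⟨d, hd⟩ := hdd
        have hprod : (∏ i : Fin (m + 1), (X - C (algebraMap D (K D) (a i)))) = NM := by
          rw [hNM]
          rw [show (fun i : Fin (m+1) => X - C (algebraMap D (K D) (a i)))
            = fun i : Fin (m+1) => (fun j : ℕ => X - C (b j)) i.val from funext fun i => by simp [hb]]
          exact Fin.prod_univ_eq_prod_range (fun j => X - C (b j)) (m + 1)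
        have hdd' : g.coeff m = algebraMap D (K D) d := by
          rw [← hd, divDiff, hprod, ← hg]
        refine ⟨s + (∏ i ∈ Finset.range m, (X - C (a i))) * C d, ?_⟩
        rw [hgeq, hhC, ← hcoef, hdd']
        simp [Polynomial.map_add, Polynomial.map_mul, hmapN, map_C, hNm]
    obtain ⟨s, hs⟩ := key n le_rfl
    refine ⟨s, f /ₘ ((∏ i ∈ Finset.range n, (X - C (a i))).map (algebraMap D (K D))), ?_⟩
    rw [hmapN] at *
    rw [← hs]
    conv_lhs => rw [← modByMonic_add_div f (∏ i ∈ Finset.range n, (X - C (b i)))]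
  · -- reverse
    intro hf k hk a haΩ
    set a' : ℕ → D := fun i => if h : i < k + 1 then a ⟨i, h⟩ else a (Fin.last k) with ha'
    have h1 : ∀ i < n, a' i ∈ Ω := by
      intro i _
      by_cases h : i ≤ k <;> simp [ha', h, haΩ]
    obtain ⟨s, t, hst⟩ := hf (∏ i ∈ Finset.range n, (X - C (a' i))) ⟨a', h1, rfl⟩
    set Pd : D[X] := ∏ i ∈ Finset.range (k + 1), (X - C (a' i)) with hPd
    set P : Polynomial (K D) := Pd.map (algebraMap D (K D)) with hP
    have hPM : P.Monic := (monic_prodXsubC _ _).map _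
    have hprod : (∏ i : Fin (k + 1), (X - C (algebraMap D (K D) (a i)))) = P := by
      rw [hP, hPd, Polynomial.map_prod]
      simp only [Polynomial.map_sub, map_X, map_C]
      rw [show (fun i : Fin (k+1) => X - C (algebraMap D (K D) (a i)))
        = fun i : Fin (k+1) => (fun j : ℕ => X - C (algebraMap D (K D) (a' j))) i.val from
          funext fun i => by simp [ha', i.isLt, not_lt.2 (Fin.is_le i)]]
      exact Fin.prod_univ_eq_prod_range (fun j => X - C (algebraMap D (K D) (a' j))) (k + 1)
    have hdvd : P ∣ (∏ i ∈ Finset.range n, (X - C (a' i))).map (algebraMap D (K D)) := by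
      rw [hP]
      exact Polynomial.map_dvd _
        (Finset.prod_dvd_prod_of_subset _ _ _ (Finset.range_subset_range.2 hk))
    have : f %ₘ P = (s %ₘ Pd).map (algebraMap D (K D)) := by
      rw [hst, add_modByMonic, (modByMonic_eq_zero_iff_dvd hPM).2 (hdvd.mul_right _), add_zero,
        hP, ← map_modByMonic _ (monic_prodXsubC _ _)]
    refine ⟨(s %ₘ Pd).coeff k, ?_⟩
    rw [divDiff, hprod, this, coeff_map]
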